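/- Assume K_{ij} = K_{ji} ≥ 0 for i ≠ j and K_{ii} = 0, and let κ = min_{i≠j} K_{ij}. Then for every u in the open simplex S and every ξ ∈ ℝ^{n+1} with Σ_i ξ_i = 0, one has ξᵀ P(u) ξ ≥ κ · Σ_{j=0}^n ξ_j²/u_j. -/

import Mathlib

/-- ξᵀ P(u) ξ ≥ κ Σ_j ξ_j²/u_j on the tangent space, κ = min_{i≠j} K_{ij}. -/
theorem stmt_2 (n : ℕ) (K : Matrix (Fin (n+1)) (Fin (n+1)) ℝ)
    (hdiag : ∀ i, K i i = 0) (hsym : ∀ i j, K i j = K j i)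
    (hnn : ∀ i j, i ≠ j → 0 ≤ K i j)
    (u : Fin (n+1) → ℝ) (hpos : ∀ i, 0 < u i) (hsum : ∑ i, u i = 1)
    (ξ : Fin (n+1) → ℝ) (htan : ∑ i, ξ i = 0) :
    ∑ i, ∑ j, ξ i * ((if i = j then (1 / u j) * ∑ k, K i k * u k else 0) - K i j) * ξ j
      ≥ sInf {x : ℝ | ∃ i j, i ≠ j ∧ x = K i j} * ∑ j, (ξ j)^2 / u j := by
  set κ := sInf {x : ℝ | ∃ i j, i ≠ j ∧ x = K i j} with hκdef
  have hfin : {x : ℝ | ∃ i j, i ≠ j ∧ x = K i j}.Finite := by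
    apply Set.Finite.subset (Set.finite_range (fun p : Fin (n+1) × Fin (n+1) => K p.1 p.2))
    rintro x ⟨i, j, -, rfl⟩
    exact ⟨(i, j), rfl⟩
  have hκle : ∀ i j, i ≠ j → κ ≤ K i j := fun i j hij =>
    csInf_le hfin.bddBelow ⟨i, j, hij, rfl⟩
  have hu0 : ∀ i, u i ≠ 0 := fun i => (hpos i).ne'
  -- Key identity: LHS quadratic form equals S1 - B3
  have hL : (∑ i, ∑ j, ξ i * ((if i = j then (1 / u j) * ∑ k, K i k * u k else 0) - K i j) * ξ j)
      = (∑ i, (ξ i ^ 2 / u i) * ∑ k, K i k * u k) - ∑ i, ∑ j, K i j * (ξ i * ξ j) := by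
    rw [← Finset.sum_sub_distrib]
    refine Finset.sum_congr rfl fun i _ => ?_
    have h1 : ∀ j, ξ i * ((if i = j then (1 / u j) * ∑ k, K i k * u k else 0) - K i j) * ξ j
        = ξ i * (if i = j then (1 / u j) * ∑ k, K i k * u k else 0) * ξ j
          - K i j * (ξ i * ξ j) := by intro j; ring
    simp only [h1]
    rw [Finset.sum_sub_distrib]
    congr 1
    rw [Finset.sum_eq_single i]
    · simp only [if_pos rfl, eq_self_iff_true, ↓reduceIte]
      field_simp
    · intro j _ hji
      simp [Ne.symm hji]
    · simp
  -- diagonal-difference double sum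
  have hterm : ∀ i j, (K i j - κ) * (u i * u j) * (ξ i / u i - ξ j / u j) ^ 2
      = (K i j * ((ξ i ^ 2 / u i) * u j) + K i j * (u i * (ξ j ^ 2 / u j))
          - 2 * (K i j * (ξ i * ξ j)))
        - (κ * ((ξ i ^ 2 / u i) * u j) + κ * (u i * (ξ j ^ 2 / u j))
          - 2 * (κ * (ξ i * ξ j))) := by
    intro i j
    have hi := hu0 i
    have hj := hu0 j
    field_simp
    ring
  have e1 : ∑ i, ∑ j, K i j * ((ξ i ^ 2 / u i) * u j)
      = ∑ i, (ξ i ^ 2 / u i) * ∑ k, K i k * u k := by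
    refine Finset.sum_congr rfl fun i _ => ?_
    rw [Finset.mul_sum]
    exact Finset.sum_congr rfl fun j _ => by ring
  have e2 : ∑ i, ∑ j, K i j * (u i * (ξ j ^ 2 / u j))
      = ∑ i, (ξ i ^ 2 / u i) * ∑ k, K i k * u k := by
    rw [Finset.sum_comm]
    refine Finset.sum_congr rfl fun j _ => ?_
    rw [Finset.mul_sum]
    exact Finset.sum_congr rfl fun i _ => by rw [hsym i j]; ring
  have c1 : ∑ i, ∑ j, κ * ((ξ i ^ 2 / u i) * u j)
      = κ * ∑ j, ξ j ^ 2 / u j := by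
    have : ∀ i, ∑ j, κ * ((ξ i ^ 2 / u i) * u j) = κ * (ξ i ^ 2 / u i) * ∑ j, u j := by
      intro i; rw [Finset.mul_sum]; exact Finset.sum_congr rfl fun j _ => by ring
    simp only [this, hsum, mul_one]
    rw [Finset.mul_sum]
  have c2 : ∑ i, ∑ j, κ * (u i * (ξ j ^ 2 / u j))
      = κ * ∑ j, ξ j ^ 2 / u j := by
    rw [Finset.sum_comm]
    have : ∀ j, ∑ i, κ * (u i * (ξ j ^ 2 / u j)) = κ * (ξ j ^ 2 / u j) * ∑ i, u i := by
      intro j; rw [Finset.mul_sum]; exact Finset.sum_congr rfl fun i _ => by ring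
    simp only [this, hsum, mul_one]
    rw [Finset.mul_sum]
  have c3 : ∑ i, ∑ j, κ * (ξ i * ξ j) = 0 := by
    have : ∀ i, ∑ j, κ * (ξ i * ξ j) = κ * ξ i * ∑ j, ξ j := by
      intro i; rw [Finset.mul_sum]; exact Finset.sum_congr rfl fun j _ => by ring
    simp [this, htan]
  have hD : ∑ i, ∑ j, (K i j - κ) * (u i * u j) * (ξ i / u i - ξ j / u j) ^ 2
      = 2 * ((∑ i, (ξ i ^ 2 / u i) * ∑ k, K i k * u k) - (∑ i, ∑ j, K i j * (ξ i * ξ j)))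
        - 2 * (κ * ∑ j, ξ j ^ 2 / u j) := by
    have e3 : ∑ i, ∑ j, 2 * (K i j * (ξ i * ξ j))
        = 2 * ∑ i, ∑ j, K i j * (ξ i * ξ j) := by
      simp [Finset.mul_sum]
    have c3' : ∑ i, ∑ j, 2 * (κ * (ξ i * ξ j)) = 0 := by
      have : (∑ i, ∑ j, 2 * (κ * (ξ i * ξ j))) = 2 * ∑ i, ∑ j, κ * (ξ i * ξ j) := by
        simp [Finset.mul_sum]
      rw [this, c3, mul_zero]
    simp only [hterm]
    simp only [Finset.sum_sub_distrib, Finset.sum_add_distrib]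
    rw [e1, e2, e3, c1, c2, c3']
    ring
  have hnonneg : 0 ≤ ∑ i, ∑ j, (K i j - κ) * (u i * u j) * (ξ i / u i - ξ j / u j) ^ 2 := by
    refine Finset.sum_nonneg fun i _ => Finset.sum_nonneg fun j _ => ?_
    rcases eq_or_ne i j with rfl | hij
    · simp
    · have h1 := hκle i j hij
      have h2 : (0:ℝ) ≤ u i * u j := le_of_lt (mul_pos (hpos i) (hpos j))
      exact mul_nonneg (mul_nonneg (by linarith) h2) (sq_nonneg _)
  rw [ge_iff_le, hL]
  linarith [hD, hnonneg]
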